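/- arXiv:2202.04294 — 2 statements merged into one kernel-verified Lean document; each statement's English description precedes it below -/
import Mathlib

section
/- Let Δ := min_{k≠k'} ‖μ(k) − μ(k')‖ > 0 for distinct centers μ(1),…,μ(K) ∈ ℝ^d, and let ε := max_m ‖x_m − μ(c_m)‖ < Δ/4 for points x_m with labels c_m. Suppose k̄ centers x_{m_1},…,x_{m_{k̄}} have been chosen from k̄ distinct true clusters. Then any point x_{m'} whose true cluster equals that of some chosen center satisfies min_{j ≤ k̄} ‖x_{m'} − x_{m_j}‖ ≤ 2ε, while any point whose true cluster differs from all chosen centers satisfies min_{j ≤ k̄} ‖x_{m'} − x_{m_j}‖ ≥ Δ − 2ε > 2ε; hence the farthest-point (Maximin) rule selects its next center from a new cluster. -/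
theorem stmt_16 (K M d : ℕ) (kb : ℕ) (hkb : 0 < kb) (hkbK : kb < K)
    (μ : Fin K → EuclideanSpace ℝ (Fin d)) (hμ : Function.Injective μ)
    (Δ ε : ℝ) (hΔ : ∀ k k', k ≠ k' → Δ ≤ ‖μ k - μ k'‖)
    (x : Fin M → EuclideanSpace ℝ (Fin d)) (c : Fin M → Fin K)
    (hx : ∀ m, ‖x m - μ (c m)‖ ≤ ε) (hε : 4 * ε < Δ)
    (ms : Fin kb → Fin M) (hms : Function.Injective (fun j => c (ms j)))
    (mstar : Fin M)
    (hmax : ∀ m'' : Fin M,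
      (⨅ j : Fin kb, ‖x m'' - x (ms j)‖) ≤ ⨅ j : Fin kb, ‖x mstar - x (ms j)‖)
    (hnew : ∃ m₀ : Fin M, ∀ j, c m₀ ≠ c (ms j)) :
    (∀ m' : Fin M, (∃ j, c m' = c (ms j)) →
        (⨅ j : Fin kb, ‖x m' - x (ms j)‖) ≤ 2 * ε) ∧
    (∀ m' : Fin M, (∀ j, c m' ≠ c (ms j)) →
        Δ - 2 * ε ≤ ⨅ j : Fin kb, ‖x m' - x (ms j)‖) ∧
    (2 * ε < Δ - 2 * ε) ∧
    (∀ j, c mstar ≠ c (ms j)) := by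
  haveI : Nonempty (Fin kb) := ⟨⟨0, hkb⟩⟩
  have hε0 : 0 ≤ ε := le_trans (norm_nonneg _) (hx mstar)
  have hbdd : ∀ m' : Fin M, BddBelow (Set.range fun j : Fin kb => ‖x m' - x (ms j)‖) :=
    fun m' => ⟨0, by rintro r ⟨j, rfl⟩; exact norm_nonneg _⟩
  have hsame : ∀ m' : Fin M, (∃ j, c m' = c (ms j)) →
      (⨅ j : Fin kb, ‖x m' - x (ms j)‖) ≤ 2 * ε := by
    rintro m' ⟨j, hj⟩
    refine le_trans (ciInf_le (hbdd m') j) ?_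
    calc ‖x m' - x (ms j)‖ ≤ ‖x m' - μ (c m')‖ + ‖μ (c m') - x (ms j)‖ := norm_sub_le_norm_sub_add_norm_sub _ _ _
      _ = ‖x m' - μ (c m')‖ + ‖x (ms j) - μ (c (ms j))‖ := by rw [hj, norm_sub_rev (μ (c (ms j))) (x (ms j))]
      _ ≤ ε + ε := add_le_add (hx m') (hx (ms j))
      _ = 2 * ε := by ring
  have hdiff : ∀ m' : Fin M, (∀ j, c m' ≠ c (ms j)) →
      Δ - 2 * ε ≤ ⨅ j : Fin kb, ‖x m' - x (ms j)‖ := by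
    intro m' h
    refine le_ciInf fun j => ?_
    have h1 : Δ ≤ ‖μ (c m') - μ (c (ms j))‖ := hΔ _ _ (h j)
    have h2 : ‖μ (c m') - μ (c (ms j))‖ ≤ ‖μ (c m') - x m'‖ + ‖x m' - x (ms j)‖ + ‖x (ms j) - μ (c (ms j))‖ := by
      calc ‖μ (c m') - μ (c (ms j))‖ ≤ ‖μ (c m') - x (ms j)‖ + ‖x (ms j) - μ (c (ms j))‖ :=
            norm_sub_le_norm_sub_add_norm_sub _ _ _
        _ ≤ ‖μ (c m') - x m'‖ + ‖x m' - x (ms j)‖ + ‖x (ms j) - μ (c (ms j))‖ :=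
            add_le_add_left (norm_sub_le_norm_sub_add_norm_sub _ _ _) _
    have h3 : ‖μ (c m') - x m'‖ ≤ ε := by rw [norm_sub_rev]; exact hx m'
    have h4 := hx (ms j)
    linarith
  have hlt : 2 * ε < Δ - 2 * ε := by linarith
  refine ⟨hsame, hdiff, hlt, ?_⟩
  intro j hj
  obtain ⟨m₀, hm₀⟩ := hnew
  have h1 := hsame mstar ⟨j, hj⟩
  have h2 := hdiff m₀ hm₀
  have h3 := hmax m₀
  linarith
end

section
/- For λ in the closed probability simplex of ℝ^M with all coordinates strictly positive, a surjective label vector c ∈ [K]^M, and centers μ(1),…,μ(K) ∈ ℝ^d, the infimum over label vectors c' at Hamming distance exactly 1 from c (with c' surjective) and arbitrary centers U' of ∑_m λ_m‖μ(c_m) − μ'(c'_m)‖² equals min over (k,k') with n(k) > 1 and k' ≠ k of (w̄(k)·w(k')/(w̄(k)+w(k'))) · ‖μ(k) − μ(k')‖², where w(k) = ∑_{m: c_m = k} λ_m, n(k) = #{m : c_m = k}, and w̄(k) = min_{m: c_m = k} λ_m. -/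
open Finset

lemma aux_key {d : ℕ} (a b : ℝ) (ha : 0 < a) (hb : 0 < b)
    (u v x : EuclideanSpace ℝ (Fin d)) :
    a * b / (a + b) * ‖u - v‖ ^ 2 ≤ a * ‖u - x‖ ^ 2 + b * ‖v - x‖ ^ 2 := by
  have htri : ‖u - v‖ ≤ ‖u - x‖ + ‖v - x‖ := by
    calc ‖u - v‖ ≤ ‖u - x‖ + ‖x - v‖ := norm_sub_le_norm_sub_add_norm_sub u x v
    _ = ‖u - x‖ + ‖v - x‖ := by rw [norm_sub_rev x v]
  have hsq : ‖u - v‖ ^ 2 ≤ (‖u - x‖ + ‖v - x‖) ^ 2 :=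
    pow_le_pow_left₀ (norm_nonneg _) htri 2
  rw [div_mul_eq_mul_div, div_le_iff₀ (by positivity)]
  nlinarith [sq_nonneg (a * ‖u - x‖ - b * ‖v - x‖),
    mul_le_mul_of_nonneg_left hsq (le_of_lt (mul_pos ha hb))]

lemma aux_mono (a a' b : ℝ) (ha : 0 < a) (haa : a ≤ a') (hb : 0 < b) :
    a * b / (a + b) ≤ a' * b / (a' + b) := by
  rw [div_le_div_iff₀ (by linarith) (by linarith)]
  nlinarith [mul_le_mul_of_nonneg_right haa (sq_nonneg b)]

theorem stmt_17 (M K d : ℕ) (hK : 2 ≤ K) (hM : K < M)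
    (lam : Fin M → ℝ) (hlam : ∀ m, 0 < lam m) (hsum : ∑ m, lam m = 1)
    (c : Fin M → Fin K) (hc : Function.Surjective c)
    (μ : Fin K → EuclideanSpace ℝ (Fin d))
    (hP : (Finset.univ.filter (fun p : Fin K × Fin K =>
        1 < (Finset.univ.filter (fun m => c m = p.1)).card ∧ p.2 ≠ p.1)).Nonempty) :
    sInf {v : ℝ | ∃ (c' : Fin M → Fin K) (μ' : Fin K → EuclideanSpace ℝ (Fin d)),
        Function.Surjective c' ∧
        (Finset.univ.filter (fun m => c' m ≠ c m)).card = 1 ∧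
        v = ∑ m, lam m * ‖μ (c m) - μ' (c' m)‖ ^ 2} =
      (Finset.univ.filter (fun p : Fin K × Fin K =>
          1 < (Finset.univ.filter (fun m => c m = p.1)).card ∧ p.2 ≠ p.1)).inf' hP
        (fun p =>
          (sInf {v : ℝ | ∃ m, c m = p.1 ∧ v = lam m} *
              (∑ m ∈ Finset.univ.filter (fun m => c m = p.2), lam m) /
            (sInf {v : ℝ | ∃ m, c m = p.1 ∧ v = lam m} +
              ∑ m ∈ Finset.univ.filter (fun m => c m = p.2), lam m)) *
          ‖μ p.1 - μ p.2‖ ^ 2) := by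
  classical
  -- abbreviations
  set S : Set ℝ := {v : ℝ | ∃ (c' : Fin M → Fin K) (μ' : Fin K → EuclideanSpace ℝ (Fin d)),
        Function.Surjective c' ∧
        (Finset.univ.filter (fun m => c' m ≠ c m)).card = 1 ∧
        v = ∑ m, lam m * ‖μ (c m) - μ' (c' m)‖ ^ 2} with hS
  have hfib : ∀ k : Fin K, (univ.filter (fun m => c m = k)).Nonempty := by
    intro k; obtain ⟨m, hm⟩ := hc k; exact ⟨m, mem_filter.2 ⟨mem_univ m, hm⟩⟩
  have hwpos : ∀ k : Fin K, 0 < ∑ m ∈ univ.filter (fun m => c m = k), lam m := by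
    intro k; exact Finset.sum_pos (fun m _ => hlam m) (hfib k)
  have hfin : ∀ k : Fin K, ({v : ℝ | ∃ m, c m = k ∧ v = lam m}).Finite := by
    intro k
    exact (Set.finite_range lam).subset (by rintro v ⟨m, _, rfl⟩; exact ⟨m, rfl⟩)
  have hwbmem : ∀ k : Fin K,
      sInf {v : ℝ | ∃ m, c m = k ∧ v = lam m} ∈ {v : ℝ | ∃ m, c m = k ∧ v = lam m} := by
    intro k
    obtain ⟨m, hm⟩ := hc k
    exact Set.Nonempty.csInf_mem ⟨lam m, m, hm, rfl⟩ (hfin k)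
  have hwble : ∀ k : Fin K, ∀ m, c m = k →
      sInf {v : ℝ | ∃ m, c m = k ∧ v = lam m} ≤ lam m := by
    intro k m hm
    exact csInf_le (hfin k).bddBelow ⟨m, hm, rfl⟩
  have hwbpos : ∀ k : Fin K, 0 < sInf {v : ℝ | ∃ m, c m = k ∧ v = lam m} := by
    intro k; obtain ⟨m, _, he⟩ := hwbmem k; rw [he]; exact hlam m
  -- the RHS value
  set g : Fin K × Fin K → ℝ := fun p =>
          (sInf {v : ℝ | ∃ m, c m = p.1 ∧ v = lam m} *
              (∑ m ∈ Finset.univ.filter (fun m => c m = p.2), lam m) /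
            (sInf {v : ℝ | ∃ m, c m = p.1 ∧ v = lam m} +
              ∑ m ∈ Finset.univ.filter (fun m => c m = p.2), lam m)) *
          ‖μ p.1 - μ p.2‖ ^ 2 with hg
  -- lower bound
  have hbound : ∀ v ∈ S, (Finset.univ.filter (fun p : Fin K × Fin K =>
      1 < (Finset.univ.filter (fun m => c m = p.1)).card ∧ p.2 ≠ p.1)).inf' hP g ≤ v := by
    rintro v ⟨c', μ', hsurj, hcard, rfl⟩
    obtain ⟨m₀, hm₀⟩ := Finset.card_eq_one.1 hcard
    have hm₀mem : m₀ ∈ univ.filter (fun m => c' m ≠ c m) := by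
      rw [hm₀]; exact Finset.mem_singleton_self m₀
    have hm₀ne : c' m₀ ≠ c m₀ := (mem_filter.1 hm₀mem).2
    have heq : ∀ m, m ≠ m₀ → c' m = c m := by
      intro m hm; by_contra h
      have : m ∈ univ.filter (fun m => c' m ≠ c m) := mem_filter.2 ⟨mem_univ m, h⟩
      rw [hm₀] at this
      exact hm (Finset.mem_singleton.1 this)
    have hpair : (c m₀, c' m₀) ∈ (Finset.univ.filter (fun p : Fin K × Fin K =>
        1 < (Finset.univ.filter (fun m => c m = p.1)).card ∧ p.2 ≠ p.1)) := by
      refine mem_filter.2 ⟨mem_univ _, ?_, hm₀ne⟩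
      obtain ⟨m₁, hm₁⟩ := hsurj (c m₀)
      have hne : m₁ ≠ m₀ := by rintro rfl; exact hm₀ne hm₁
      have hsub : ({m₀, m₁} : Finset (Fin M)) ⊆ univ.filter (fun m => c m = c m₀) := by
        intro x hx
        rcases Finset.mem_insert.1 hx with rfl | hx
        · exact mem_filter.2 ⟨mem_univ _, rfl⟩
        · rw [Finset.mem_singleton.1 hx]
          exact mem_filter.2 ⟨mem_univ _, by rw [← heq m₁ hne, hm₁]⟩
      calc 1 < ({m₀, m₁} : Finset (Fin M)).card := by
              rw [Finset.card_pair (Ne.symm hne)]; norm_num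
        _ ≤ _ := Finset.card_le_card hsub
    have hm₀fib : m₀ ∉ univ.filter (fun m => c m = c' m₀) := by
      simp only [mem_filter, mem_univ, true_and]
      exact fun h => hm₀ne h.symm
    have step3 : ∑ m ∈ insert m₀ (univ.filter (fun m => c m = c' m₀)),
          lam m * ‖μ (c m) - μ' (c' m)‖ ^ 2
        ≤ ∑ m, lam m * ‖μ (c m) - μ' (c' m)‖ ^ 2 := by
      refine Finset.sum_le_sum_of_subset_of_nonneg (Finset.subset_univ _) ?_
      intro m _ _; exact mul_nonneg (hlam m).le (by positivity)
    have hsum2 : ∑ m ∈ univ.filter (fun m => c m = c' m₀),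
          lam m * ‖μ (c m) - μ' (c' m)‖ ^ 2
        = (∑ m ∈ univ.filter (fun m => c m = c' m₀), lam m) * ‖μ (c' m₀) - μ' (c' m₀)‖ ^ 2 := by
      rw [Finset.sum_mul]
      refine Finset.sum_congr rfl ?_
      intro m hm
      have hcm : c m = c' m₀ := (mem_filter.1 hm).2
      have hmne : m ≠ m₀ := by rintro rfl; exact hm₀ne hcm.symm
      rw [heq m hmne, hcm]
    calc (Finset.univ.filter (fun p : Fin K × Fin K =>
          1 < (Finset.univ.filter (fun m => c m = p.1)).card ∧ p.2 ≠ p.1)).inf' hP g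
        ≤ g (c m₀, c' m₀) := Finset.inf'_le g hpair
      _ ≤ (lam m₀ * (∑ m ∈ univ.filter (fun m => c m = c' m₀), lam m) /
            (lam m₀ + ∑ m ∈ univ.filter (fun m => c m = c' m₀), lam m)) *
            ‖μ (c m₀) - μ (c' m₀)‖ ^ 2 := by
          refine mul_le_mul_of_nonneg_right
            (aux_mono _ _ _ (hwbpos (c m₀)) (hwble (c m₀) m₀ rfl) (hwpos (c' m₀)))
            (by positivity)
      _ ≤ lam m₀ * ‖μ (c m₀) - μ' (c' m₀)‖ ^ 2 +
            (∑ m ∈ univ.filter (fun m => c m = c' m₀), lam m) *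
            ‖μ (c' m₀) - μ' (c' m₀)‖ ^ 2 :=
          aux_key _ _ (hlam m₀) (hwpos (c' m₀)) _ _ _
      _ = ∑ m ∈ insert m₀ (univ.filter (fun m => c m = c' m₀)),
            lam m * ‖μ (c m) - μ' (c' m)‖ ^ 2 := by
          rw [Finset.sum_insert hm₀fib, hsum2]
      _ ≤ _ := step3
  -- attainment
  have hmem : (Finset.univ.filter (fun p : Fin K × Fin K =>
      1 < (Finset.univ.filter (fun m => c m = p.1)).card ∧ p.2 ≠ p.1)).inf' hP g ∈ S := by
    obtain ⟨p, hp, hval⟩ := Finset.exists_mem_eq_inf' hP g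
    obtain ⟨k, k'⟩ := p
    obtain ⟨hcardk, hk'k⟩ := (mem_filter.1 hp).2
    obtain ⟨m₀, hm₀c, hm₀l⟩ := hwbmem k
    rw [hval]
    set a : ℝ := sInf {v : ℝ | ∃ m, c m = k ∧ v = lam m} with ha
    set w : ℝ := ∑ m ∈ univ.filter (fun m => c m = k'), lam m with hw
    have hapos : 0 < a := hwbpos k
    have hwpos' : 0 < w := hwpos k'
    have hs : (0:ℝ) < a + w := by linarith
    set z : EuclideanSpace ℝ (Fin d) := (a + w)⁻¹ • (a • μ k + w • μ k') with hz
    refine ⟨Function.update c m₀ k', Function.update μ k' z, ?_, ?_, ?_⟩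
    · -- surjective
      intro k₂
      rcases eq_or_ne k₂ k with rfl | hne
      · obtain ⟨x, hx, y, hy, hxy⟩ := Finset.one_lt_card.1 hcardk
        have hx' : c x = k₂ := (mem_filter.1 hx).2
        have hy' : c y = k₂ := (mem_filter.1 hy).2
        rcases eq_or_ne x m₀ with rfl | hxm
        · exact ⟨y, by rw [Function.update_of_ne (fun h => hxy h.symm), hy']⟩
        · exact ⟨x, by rw [Function.update_of_ne hxm, hx']⟩
      · obtain ⟨m, hm⟩ := hc k₂
        have hmne : m ≠ m₀ := by rintro rfl; exact hne (hm ▸ hm₀c ▸ rfl)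
        exact ⟨m, by rw [Function.update_of_ne hmne, hm]⟩
    · -- card = 1
      have : univ.filter (fun m => Function.update c m₀ k' m ≠ c m) = {m₀} := by
        ext m
        simp only [mem_filter, mem_univ, true_and, Finset.mem_singleton]
        constructor
        · intro h; by_contra hne; exact h (Function.update_of_ne hne _ _)
        · rintro rfl
          rw [Function.update_self, hm₀c]
          exact hk'k
      rw [this, Finset.card_singleton]
    · -- value
      have hzero : ∀ m ∈ univ, m ∉ insert m₀ (univ.filter (fun m => c m = k')) →
          lam m * ‖μ (c m) - Function.update μ k' z (Function.update c m₀ k' m)‖ ^ 2 = 0 := by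
        intro m _ hm
        have hmne : m ≠ m₀ := fun h => hm (h ▸ Finset.mem_insert_self _ _)
        have hck : c m ≠ k' := fun h =>
          hm (Finset.mem_insert_of_mem (mem_filter.2 ⟨mem_univ _, h⟩))
        rw [Function.update_of_ne hmne, Function.update_of_ne hck, sub_self]
        simp
      have hm₀fib : m₀ ∉ univ.filter (fun m => c m = k') := by
        simp only [mem_filter, mem_univ, true_and]
        rw [hm₀c]; exact fun h => hk'k h.symm
      have hsplit : ∑ m, lam m * ‖μ (c m) - Function.update μ k' z (Function.update c m₀ k' m)‖ ^ 2
          = lam m₀ * ‖μ k - z‖ ^ 2 + w * ‖μ k' - z‖ ^ 2 := by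
        rw [← Finset.sum_subset (Finset.subset_univ _) hzero, Finset.sum_insert hm₀fib]
        congr 1
        · rw [Function.update_self, Function.update_self, hm₀c]
        · rw [hw, Finset.sum_mul]
          refine Finset.sum_congr rfl ?_
          intro m hm
          have hcm : c m = k' := (mem_filter.1 hm).2
          have hmne : m ≠ m₀ := by
            rintro rfl; rw [hm₀c] at hcm; exact hk'k hcm.symm
          rw [Function.update_of_ne hmne, hcm, Function.update_self]
      have h1 : μ k - z = (w / (a + w)) • (μ k - μ k') := by
        rw [hz]; match_scalars <;> field_simp <;> ring
      have h2 : μ k' - z = (a / (a + w)) • (μ k' - μ k) := by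
        rw [hz]; match_scalars <;> field_simp <;> ring
      rw [hsplit, h1, h2, norm_smul, norm_smul]
      simp only [Real.norm_eq_abs, mul_pow, sq_abs, norm_sub_rev (μ k') (μ k)]
      rw [← hm₀l, hg]
      simp only [← ha, ← hw]
      field_simp
      ring
  exact le_antisymm (csInf_le ⟨_, hbound⟩ hmem) (le_csInf ⟨_, hmem⟩ hbound)
end
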